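/- Let (R, m) be a local Artinian ring with socle s = (0 : m) of dimension s over R/m. Let g ∈ R[t] have degree n and set I = (0 :_R c(g)). Suppose J is an ideal with I ⊆ J ⊆ (I : m) and dim_{R/m}(J/I) = r > s, and m is a natural number with (m+1)r > (n+m+1)s. Then there exists a polynomial f ∈ R[t] of degree at most m with c(f) ⊆ J, fg = 0, and c(f)·c(g) ≠ 0. -/

import Mathlib

open Polynomial

/-- The content ideal of a polynomial: the ideal generated by its coefficients. -/
noncomputable def cont {R : Type*} [CommRing R] (p : R[X]) : Ideal R :=
  Ideal.span (Set.range p.coeff)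

/-- The minimal number of generators of an ideal. -/
noncomputable def mug {R : Type*} [CommRing R] (I : Ideal R) : ℕ :=
  sInf {n | ∃ x : Fin n → R, Ideal.span (Set.range x) = I}

/-- The Dedekind--Mertens number of a polynomial. -/
noncomputable def dmNumber (R : Type*) [CommRing R] (g : R[X]) : ℕ :=
  sInf {k | 0 < k ∧ ∀ f : R[X], cont (f * g) * cont f ^ (k - 1) = cont f ^ k * cont g}

/-- The polarized Dedekind--Mertens number of a polynomial. -/
noncomputable def polDmNumber (R : Type*) [CommRing R] (g : R[X]) : ℕ :=
  sInf {k | 0 < k ∧ ∀ f : Fin k → R[X],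
    (∑ i, cont (f i * g) * ∏ j ∈ Finset.univ.erase i, cont (f j)) =
      (∏ i, cont (f i)) * cont g}

/-- `x` is in the integral closure of the ideal `I`. -/
def memIntCl {R : Type*} [CommRing R] (I : Ideal R) (x : R) : Prop :=
  ∃ k : ℕ, 0 < k ∧ ∃ a : ℕ → R, (∀ i, 1 ≤ i → i ≤ k → a i ∈ I ^ i) ∧
    x ^ k + ∑ i ∈ Finset.Icc 1 k, a i * x ^ (k - i) = 0

/-- Theorem 3.1: Let `(R,m)` be a local Artinian ring whose socle `(0 : m)` has dimension
`s` over `R/m`.  Let `g` have degree `n`, let `I = (0 : c(g))`, and let `J` be an ideal with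
`I ⊆ J ⊆ (I : m)` such that `J/I` has dimension `r > s` over `R/m`.  If `(m+1)r > (n+m+1)s`,
then there is a polynomial `f` of degree at most `m` with `c(f) ⊆ J`, `fg = 0` and
`c(f)c(g) ≠ 0`.  (Vector-space dimensions over `R/m` are encoded by explicit bases:
a spanning family whose linear relations have coefficients in `m`.) -/
theorem exists_annihilating_polynomial {R : Type*} [CommRing R] [IsArtinianRing R]
    [IsLocalRing R] (s : ℕ)
    (hsoc : ∃ y : Fin s → R,
      Ideal.span (Set.range y) = Submodule.colon ⊥ (IsLocalRing.maximalIdeal R : Set R) ∧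
      ∀ c : Fin s → R, (∑ i, c i * y i) = 0 → ∀ i, c i ∈ IsLocalRing.maximalIdeal R)
    (g : R[X]) (n : ℕ) (hn : g.natDegree = n)
    (J : Ideal R) (hIJ : Submodule.colon ⊥ (cont g : Set R) ≤ J)
    (hJI : J ≤ Submodule.colon (Submodule.colon ⊥ (cont g : Set R)) (IsLocalRing.maximalIdeal R : Set R))
    (r : ℕ) (hrs : r > s)
    (hdim : ∃ x : Fin r → R, (∀ i, x i ∈ J) ∧
      J ≤ Submodule.colon ⊥ (cont g : Set R) ⊔ Ideal.span (Set.range x) ∧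
      ∀ c : Fin r → R, (∑ i, c i * x i) ∈ Submodule.colon ⊥ (cont g : Set R) →
        ∀ i, c i ∈ IsLocalRing.maximalIdeal R)
    (m : ℕ) (hm : (m + 1) * r > (n + m + 1) * s) :
    ∃ f : R[X], f.natDegree ≤ m ∧ cont f ≤ J ∧ f * g = 0 ∧ cont f * cont g ≠ ⊥ := by
  classical
  obtain ⟨y, hy_span, hy_ind⟩ := hsoc
  obtain ⟨x, hxJ, hJsp, hx_ind⟩ := hdim
  set I : Ideal R := Submodule.colon ⊥ (cont g : Set R) with hI
  set mm : Ideal R := IsLocalRing.maximalIdeal R with hmm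
  -- each x i * g.coeff l lies in the socle
  have hsocmem : ∀ (i : Fin r) (l : ℕ), x i * g.coeff l ∈ Ideal.span (Set.range y) := by
    intro i l
    rw [hy_span, Submodule.mem_colon]
    intro a ha
    have h1 : x i * a ∈ I := by
      have h := hJI (hxJ i)
      rw [Submodule.mem_colon] at h
      simpa [smul_eq_mul, mul_comm] using h a ha
    rw [hI, Submodule.mem_colon] at h1
    have h2 : g.coeff l ∈ cont g := Ideal.subset_span ⟨l, rfl⟩
    have h3 := h1 _ h2
    simp only [smul_eq_mul, Submodule.mem_bot] at h3 ⊢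
    linear_combination h3
  -- choose socle coordinates
  have hb : ∀ (i : Fin r) (l : ℕ), ∃ b : Fin s → R, ∑ j, b j • y j = x i * g.coeff l :=
    fun i l => (Submodule.mem_span_range_iff_exists_fun R).mp (hsocmem i l)
  choose b hbspec using hb
  -- the residue field
  set K := R ⧸ mm with hK
  set π : R →+* K := Ideal.Quotient.mk mm with hπ
  -- the matrix
  set M : Matrix (Fin (n + m + 1) × Fin s) (Fin (m + 1) × Fin r) K :=
    fun pj ki => if (ki.1 : ℕ) ≤ (pj.1 : ℕ) then π (b ki.2 ((pj.1 : ℕ) - (ki.1 : ℕ)) pj.2)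
      else 0 with hM
  -- a nonzero kernel vector
  have hninj : ¬ Function.Injective M.mulVecLin := by
    intro hinj
    have hle := LinearMap.finrank_le_finrank_of_injective hinj
    rw [Module.finrank_fintype_fun_eq_card, Module.finrank_fintype_fun_eq_card] at hle
    simp only [Fintype.card_prod, Fintype.card_fin] at hle
    omega
  rw [Function.not_injective_iff] at hninj
  obtain ⟨v1, v2, hv12, hvne⟩ := hninj
  set v : (Fin (m + 1) × Fin r) → K := v1 - v2 with hv
  have hvker : M.mulVecLin v = 0 := by
    rw [hv, map_sub, hv12, sub_self]
  have hvnz : v ≠ 0 := sub_ne_zero.mpr hvne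
  -- lift to R
  have hlift : ∀ ki : Fin (m + 1) × Fin r, ∃ z : R, π z = v ki :=
    fun ki => Ideal.Quotient.mk_surjective (v ki)
  choose c hc using hlift
  -- the polynomial
  set a : Fin (m + 1) → R := fun k => ∑ i, c (k, i) * x i with ha
  set f : R[X] := ∑ k : Fin (m + 1), C (a k) * X ^ (k : ℕ) with hf
  have hdegf : f.natDegree ≤ m := by
    apply Polynomial.natDegree_sum_le_of_forall_le
    intro k _
    refine le_trans (natDegree_mul_le) ?_
    simp [Polynomial.natDegree_X_pow]
    omega
  have hcoefff : ∀ k : Fin (m + 1), f.coeff (k : ℕ) = a k := by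
    intro k
    rw [hf, Polynomial.finset_sum_coeff]
    rw [Finset.sum_eq_single k]
    · simp [Polynomial.coeff_C_mul, Polynomial.coeff_X_pow]
    · intro k' _ hk'
      simp only [Polynomial.coeff_C_mul, Polynomial.coeff_X_pow]
      rw [if_neg, mul_zero]
      intro hkk
      exact hk' (by ext; omega)
    · intro h; exact absurd (Finset.mem_univ k) h
  have hcoeffJ : ∀ q : ℕ, f.coeff q ∈ J := by
    intro q
    by_cases hq : q ≤ m
    · have := hcoefff ⟨q, by omega⟩
      simp only at this
      rw [this, ha]
      exact Ideal.sum_mem _ fun i _ => J.mul_mem_left _ (hxJ i)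
    · rw [Polynomial.coeff_eq_zero_of_natDegree_lt (by omega)]
      exact J.zero_mem
  -- the key coefficient formula
  have hWmem : ∀ (p : ℕ) (j : Fin s), p < n + m + 1 →
      (∑ k : Fin (m + 1), ∑ i : Fin r, c (k, i) *
        (if (k : ℕ) ≤ p then b i (p - (k : ℕ)) j else 0)) ∈ mm := by
    intro p j hp
    rw [← Ideal.Quotient.eq_zero_iff_mem, ← hπ]
    have h0 : M.mulVecLin v (⟨p, hp⟩, j) = 0 := by rw [hvker]; rfl
    simp only [Matrix.mulVecLin_apply, Matrix.mulVec, dotProduct,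
      Fintype.sum_prod_type] at h0
    rw [map_sum, ← h0]
    refine Finset.sum_congr rfl fun k _ => ?_
    rw [map_sum]
    refine Finset.sum_congr rfl fun i _ => ?_
    rw [map_mul, hc (k, i), hM]
    simp only [apply_ite π, map_zero]
    ring
  have hmulcoeff : ∀ p : ℕ, (f * g).coeff p =
      ∑ k : Fin (m + 1), if (k : ℕ) ≤ p then a k * g.coeff (p - (k : ℕ)) else 0 := by
    intro p
    rw [hf, Finset.sum_mul, Polynomial.finset_sum_coeff]
    refine Finset.sum_congr rfl fun k _ => ?_
    rw [show C (a k) * X ^ (k : ℕ) * g = C (a k) * g * X ^ (k : ℕ) by ring]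
    rw [Polynomial.coeff_mul_X_pow', Polynomial.coeff_C_mul]
  have hfg : f * g = 0 := by
    ext p
    rw [Polynomial.coeff_zero]
    by_cases hp : p < n + m + 1
    · rw [hmulcoeff]
      have step : ∀ k : Fin (m + 1), (if (k : ℕ) ≤ p then a k * g.coeff (p - (k : ℕ)) else 0)
          = ∑ j : Fin s, (∑ i : Fin r, c (k, i) *
              (if (k : ℕ) ≤ p then b i (p - (k : ℕ)) j else 0)) * y j := by
        intro k
        split
        · rw [ha]
          simp only [Finset.sum_mul]
          rw [Finset.sum_comm]
          refine Finset.sum_congr rfl fun i _ => ?_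
          rw [mul_assoc, ← hbspec i (p - (k : ℕ))]
          rw [Finset.mul_sum]
          refine Finset.sum_congr rfl fun j _ => ?_
          simp only [smul_eq_mul]; ring
        · simp
      rw [Finset.sum_congr rfl fun k _ => step k]
      rw [Finset.sum_comm]
      refine Finset.sum_eq_zero fun j _ => ?_
      rw [← Finset.sum_mul]
      have hW := hWmem p j hp
      have hyj : y j ∈ Submodule.colon ⊥ (mm : Set R) := hy_span ▸ Ideal.subset_span ⟨j, rfl⟩
      rw [Submodule.mem_colon] at hyj
      have hz := hyj _ hW
      simp only [smul_eq_mul, Submodule.mem_bot] at hz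
      linear_combination hz
    · apply Polynomial.coeff_eq_zero_of_natDegree_lt
      calc (f * g).natDegree ≤ f.natDegree + g.natDegree := Polynomial.natDegree_mul_le
        _ ≤ m + n := by omega
        _ < p := by omega
  -- nonvanishing of the content product
  have hne : cont f * cont g ≠ ⊥ := by
    intro hbot
    obtain ⟨ki0, hki0⟩ := Function.ne_iff.mp hvnz
    have hIa : a ki0.1 ∈ I := by
      rw [hI, Submodule.mem_colon]
      intro z hz
      have h1 : a ki0.1 ∈ cont f := by
        rw [← hcoefff ki0.1]
        exact Ideal.subset_span ⟨(ki0.1 : ℕ), rfl⟩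
      have h2 : a ki0.1 * z ∈ cont f * cont g := Ideal.mul_mem_mul h1 hz
      rw [hbot] at h2
      simpa [smul_eq_mul] using h2
    have hmemm : c (ki0.1, ki0.2) ∈ mm := hx_ind (fun i => c (ki0.1, i)) hIa ki0.2
    have : v ki0 = 0 := by
      rw [← hc ki0, hπ]
      exact Ideal.Quotient.eq_zero_iff_mem.mpr hmemm
    exact hki0 this
  exact ⟨f, hdegf, Ideal.span_le.mpr (by rintro z ⟨q, rfl⟩; exact hcoeffJ q), hfg, hne⟩
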